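/- On a compact almost Hermitian manifold, a (p,q)-form α satisfies Δ̃_BC α = 0 if and only if ∂α = 0, ∂̄α = 0, and ∂∂̄(*α) = 0, where * is the C-linear Hodge star operator. -/

import Mathlib

/-!
STATEMENT 2: On a compact almost Hermitian manifold, a (p,q)-form α satisfies
Δ̃_BC α = 0 iff ∂α = 0, ∂̄α = 0 and ∂∂̄(*α) = 0.

We model the space of complex-valued forms as a bigraded inner product space
(the L² inner product coming from compactness), with ∂, ∂̄, the ℂ-linear Hodge star,
the formal adjoints ∂* = -*∂̄*, ∂̄* = -*∂* (adjointness is the integration by parts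
available on a compact manifold), and ** = (-1)^{p+q} on (p,q)-forms.
-/

noncomputable section

variable {V : Type*} [NormedAddCommGroup V] [InnerProductSpace ℂ V]

/-- The formal adjoint ∂* = -*∂̄*. -/
def delStar (star' delbar : V →ₗ[ℂ] V) : V →ₗ[ℂ] V := -(star' ∘ₗ delbar ∘ₗ star')

/-- The formal adjoint ∂̄* = -*∂*. -/
def delbarStar (star' del : V →ₗ[ℂ] V) : V →ₗ[ℂ] V := -(star' ∘ₗ del ∘ₗ star')

/-- The Bott-Chern Laplacian
Δ̃_BC = ∂∂̄∂̄*∂* + ∂̄*∂*∂∂̄ + ∂*∂̄∂̄*∂ + ∂̄*∂∂*∂̄ + ∂*∂ + ∂̄*∂̄. -/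
def BCLap (del delbar star' : V →ₗ[ℂ] V) : V →ₗ[ℂ] V :=
  del ∘ₗ delbar ∘ₗ delbarStar star' del ∘ₗ delStar star' delbar
  + delbarStar star' del ∘ₗ delStar star' delbar ∘ₗ del ∘ₗ delbar
  + delStar star' delbar ∘ₗ delbar ∘ₗ delbarStar star' del ∘ₗ del
  + delbarStar star' del ∘ₗ del ∘ₗ delStar star' delbar ∘ₗ delbar
  + delStar star' delbar ∘ₗ del
  + delbarStar star' del ∘ₗ delbar

end

theorem bc_laplacian_kernel_characterization
    (V : Type*) [NormedAddCommGroup V] [InnerProductSpace ℂ V]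
    (n p q : ℤ)
    (A : ℤ → ℤ → Submodule ℂ V)
    (del delbar star' : V →ₗ[ℂ] V)
    (hdel : ∀ p' q' : ℤ, ∀ x ∈ A p' q', del x ∈ A (p' + 1) q')
    (hdelbar : ∀ p' q' : ℤ, ∀ x ∈ A p' q', delbar x ∈ A p' (q' + 1))
    (hstarA : ∀ p' q' : ℤ, ∀ x ∈ A p' q', star' x ∈ A (n - q') (n - p'))
    (hstarstar : ∀ p' q' : ℤ, ∀ x ∈ A p' q', star' (star' x) = ((-1 : ℂ) ^ (p' + q')) • x)
    (hadj_del : ∀ x y : V, (inner ℂ (del x) y : ℂ) = inner ℂ x (delStar star' delbar y))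
    (hadj_delbar : ∀ x y : V, (inner ℂ (delbar x) y : ℂ) = inner ℂ x (delbarStar star' del y)) :
    ∀ α ∈ A p q,
      (BCLap del delbar star' α = 0 ↔
        del α = 0 ∧ delbar α = 0 ∧ del (delbar (star' α)) = 0) := by
  intro α hα
  set ds := delStar star' delbar with hds
  set dbs := delbarStar star' del with hdbs
  -- membership facts
  have hsα : star' α ∈ A (n - q) (n - p) := hstarA p q α hα
  have hz : delbar (star' α) ∈ A (n - q) ((n - p) + 1) := hdelbar _ _ _ hsα
  have hw : del (delbar (star' α)) ∈ A ((n - q) + 1) ((n - p) + 1) := hdel _ _ _ hz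
  -- the key kernel-element identity: δ̄*δ*α = ε • *(∂∂̄(*α))
  have hc : dbs (ds α) =
      ((-1 : ℂ) ^ ((n - q) + ((n - p) + 1))) • star' (del (delbar (star' α))) := by
    have h1 : ds α = -(star' (delbar (star' α))) := by
      simp [hds, delStar, LinearMap.comp_apply]
    have h2 : star' (star' (delbar (star' α))) =
        ((-1 : ℂ) ^ ((n - q) + ((n - p) + 1))) • delbar (star' α) :=
      hstarstar _ _ _ hz
    rw [h1, hdbs]
    simp only [delbarStar, LinearMap.neg_apply, LinearMap.comp_apply, map_neg, neg_neg, h2,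
      map_smul]
  have hε : ((-1 : ℂ) ^ ((n - q) + ((n - p) + 1))) ≠ 0 :=
    zpow_ne_zero _ (by norm_num)
  constructor
  · intro h
    -- inner product computation
    have key : (inner ℂ (BCLap del delbar star' α) α : ℂ) =
        ((‖dbs (ds α)‖ ^ 2 + ‖del (delbar α)‖ ^ 2 + ‖dbs (del α)‖ ^ 2
          + ‖ds (delbar α)‖ ^ 2 + ‖del α‖ ^ 2 + ‖delbar α‖ ^ 2 : ℝ) : ℂ) := by
      have e1 : (inner ℂ (del (delbar (dbs (ds α)))) α : ℂ) = (‖dbs (ds α)‖ : ℂ) ^ 2 := by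
        rw [hadj_del, hadj_delbar, inner_self_eq_norm_sq_to_K]
        norm_num
      have e2 : (inner ℂ (dbs (ds (del (delbar α)))) α : ℂ) = (‖del (delbar α)‖ : ℂ) ^ 2 := by
        rw [← inner_conj_symm, ← hadj_delbar, ← hadj_del, inner_self_eq_norm_sq_to_K]
        simp
      have e3 : (inner ℂ (ds (delbar (dbs (del α)))) α : ℂ) = (‖dbs (del α)‖ : ℂ) ^ 2 := by
        rw [← inner_conj_symm, ← hadj_del, ← inner_conj_symm (del α), hadj_delbar,
          inner_self_eq_norm_sq_to_K]
        simp
      have e4 : (inner ℂ (dbs (del (ds (delbar α)))) α : ℂ) = (‖ds (delbar α)‖ : ℂ) ^ 2 := by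
        rw [← inner_conj_symm, ← hadj_delbar, ← inner_conj_symm (delbar α), hadj_del,
          inner_self_eq_norm_sq_to_K]
        simp
      have e5 : (inner ℂ (ds (del α)) α : ℂ) = (‖del α‖ : ℂ) ^ 2 := by
        rw [← inner_conj_symm, ← hadj_del, inner_self_eq_norm_sq_to_K]
        simp
      have e6 : (inner ℂ (dbs (delbar α)) α : ℂ) = (‖delbar α‖ : ℂ) ^ 2 := by
        rw [← inner_conj_symm, ← hadj_delbar, inner_self_eq_norm_sq_to_K]
        simp
      have expand : BCLap del delbar star' α =
          del (delbar (dbs (ds α))) + dbs (ds (del (delbar α)))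
          + ds (delbar (dbs (del α))) + dbs (del (ds (delbar α)))
          + ds (del α) + dbs (delbar α) := by
        simp [BCLap, LinearMap.add_apply, LinearMap.comp_apply, hds, hdbs]
      rw [expand]
      simp only [inner_add_left, e1, e2, e3, e4, e5, e6]
      push_cast
      ring
    rw [h, inner_zero_left] at key
    have hre : (‖dbs (ds α)‖ ^ 2 + ‖del (delbar α)‖ ^ 2 + ‖dbs (del α)‖ ^ 2
        + ‖ds (delbar α)‖ ^ 2 + ‖del α‖ ^ 2 + ‖delbar α‖ ^ 2 : ℝ) = 0 := by
      exact_mod_cast key.symm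
    have n1 : ‖del α‖ = 0 := by
      nlinarith [sq_nonneg ‖dbs (ds α)‖, sq_nonneg ‖del (delbar α)‖, sq_nonneg ‖dbs (del α)‖,
        sq_nonneg ‖ds (delbar α)‖, sq_nonneg ‖del α‖, sq_nonneg ‖delbar α‖, norm_nonneg (del α)]
    have n2 : ‖delbar α‖ = 0 := by
      nlinarith [sq_nonneg ‖dbs (ds α)‖, sq_nonneg ‖del (delbar α)‖, sq_nonneg ‖dbs (del α)‖,
        sq_nonneg ‖ds (delbar α)‖, sq_nonneg ‖del α‖, sq_nonneg ‖delbar α‖,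
        norm_nonneg (delbar α)]
    have n3 : ‖dbs (ds α)‖ = 0 := by
      nlinarith [sq_nonneg ‖dbs (ds α)‖, sq_nonneg ‖del (delbar α)‖, sq_nonneg ‖dbs (del α)‖,
        sq_nonneg ‖ds (delbar α)‖, sq_nonneg ‖del α‖, sq_nonneg ‖delbar α‖,
        norm_nonneg (dbs (ds α))]
    refine ⟨norm_eq_zero.mp n1, norm_eq_zero.mp n2, ?_⟩
    have hc0 : dbs (ds α) = 0 := norm_eq_zero.mp n3
    rw [hc] at hc0
    have hstarw : star' (del (delbar (star' α))) = 0 := by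
      rcases smul_eq_zero.mp hc0 with h' | h'
      · exact absurd h' hε
      · exact h'
    have := hstarstar _ _ _ hw
    rw [hstarw, map_zero] at this
    have hε' : ((-1 : ℂ) ^ (((n - q) + 1) + ((n - p) + 1))) ≠ 0 :=
      zpow_ne_zero _ (by norm_num)
    rcases smul_eq_zero.mp this.symm with h' | h'
    · exact absurd h' hε'
    · exact h'
  · rintro ⟨h1, h2, h3⟩
    have hc0 : dbs (ds α) = 0 := by rw [hc, h3, map_zero, smul_zero]
    simp [BCLap, LinearMap.add_apply, LinearMap.comp_apply, ← hds, ← hdbs, h1, h2, hc0,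
      map_zero]
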